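/- If A and B are finite subsets of the hypercube {0,1}^n ⊆ ℤ^n, then |A + B| ≥ (|A|·|B|)^{log 3 / log 4}. -/

import Mathlib

open Pointwise Filter

noncomputable section SumsetAux

private def ss : ℝ := Real.log 3 / Real.log 2

private lemma log2_pos : (0:ℝ) < Real.log 2 := Real.log_pos (by norm_num)

private lemma ss_pos : 0 < ss := div_pos (Real.log_pos (by norm_num)) log2_pos

private lemma one_lt_ss : 1 < ss :=
  (one_lt_div log2_pos).2 (Real.log_lt_log (by norm_num) (by norm_num))

private lemma ss_lt_two : ss < 2 := by
  rw [ss, div_lt_iff₀ log2_pos]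
  have : Real.log 3 < Real.log 4 := Real.log_lt_log (by norm_num) (by norm_num)
  have h4 : Real.log 4 = 2 * Real.log 2 := by
    rw [show (4:ℝ) = 2^2 by norm_num, Real.log_pow]; push_cast; ring
  linarith

private lemma ss_mul_log2 : ss * Real.log 2 = Real.log 3 :=
  div_mul_cancel₀ _ (ne_of_gt log2_pos)

private lemma monoOn_of_hasDeriv {f f' : ℝ → ℝ} {D : Set ℝ} (hD : Convex ℝ D)
    (hc : ContinuousOn f D) (hd : ∀ x ∈ interior D, HasDerivAt f (f' x) x)
    (h0 : ∀ x ∈ interior D, 0 ≤ f' x) : MonotoneOn f D :=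
  monotoneOn_of_deriv_nonneg hD hc
    (fun x hx => (hd x hx).differentiableAt.differentiableWithinAt)
    (fun x hx => (hd x hx).deriv ▸ h0 x hx)

private lemma antiOn_of_hasDeriv {f f' : ℝ → ℝ} {D : Set ℝ} (hD : Convex ℝ D)
    (hc : ContinuousOn f D) (hd : ∀ x ∈ interior D, HasDerivAt f (f' x) x)
    (h0 : ∀ x ∈ interior D, f' x ≤ 0) : AntitoneOn f D :=
  antitoneOn_of_deriv_nonpos hD hc
    (fun x hx => (hd x hx).differentiableAt.differentiableWithinAt)
    (fun x hx => (hd x hx).deriv ▸ h0 x hx)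

private lemma W_nonneg {a : ℝ} (ha0 : 0 ≤ a) (ha1 : a ≤ 1) {v : ℝ} (hv : 0 ≤ v) :
    a * Real.sinh v * Real.cosh (a * v) ≤ Real.cosh v * Real.sinh (a * v) := by
  have key : MonotoneOn
      (fun v => Real.cosh v * Real.sinh (a*v) - a * Real.sinh v * Real.cosh (a*v))
      (Set.Ici 0) := by
    apply monoOn_of_hasDeriv (f' := fun v => (1 - a^2) * (Real.sinh v * Real.sinh (a*v)))
      (convex_Ici 0)
    · apply Continuous.continuousOn
      fun_prop
    · intro x _
      have hlin : HasDerivAt (fun v : ℝ => a * v) a x := by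
        simpa using (hasDerivAt_id x).const_mul a
      have h1 : HasDerivAt (fun v => Real.cosh v * Real.sinh (a*v))
          (Real.sinh x * Real.sinh (a*x) + Real.cosh x * (Real.cosh (a*x) * a)) x :=
        (Real.hasDerivAt_cosh x).mul hlin.sinh
      have h2 : HasDerivAt (fun v => a * Real.sinh v * Real.cosh (a*v))
          ((a * Real.cosh x) * Real.cosh (a*x) + (a * Real.sinh x) * (Real.sinh (a*x) * a)) x := by
        have := ((Real.hasDerivAt_sinh x).const_mul a).mul hlin.cosh
        exact this
        try ring
      refine (h1.sub h2).congr_deriv ?_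
      try ring
    · intro x hx
      rw [interior_Ici] at hx
      have h1 : 0 ≤ Real.sinh x := Real.sinh_nonneg_iff.2 (le_of_lt hx)
      have h2 : 0 ≤ Real.sinh (a*x) := Real.sinh_nonneg_iff.2 (mul_nonneg ha0 (le_of_lt hx))
      have ha2 : a^2 ≤ 1 := by nlinarith
      exact mul_nonneg (by linarith) (mul_nonneg h1 h2)
  have h0 := key Set.self_mem_Ici (Set.mem_Ici.2 hv) hv
  simp only [Real.sinh_zero, Real.cosh_zero, mul_zero, zero_mul, sub_zero, mul_one] at h0
  norm_num at h0
  linarith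

private lemma ratio_mono {a : ℝ} (ha0 : 0 < a) (ha1 : a ≤ 1) :
    MonotoneOn (fun v => Real.sinh v / Real.sinh (a*v)) (Set.Ioi 0) := by
  apply monoOn_of_hasDeriv
    (f' := fun v => (Real.cosh v * Real.sinh (a*v) - Real.sinh v * (Real.cosh (a*v) * a)) /
      (Real.sinh (a*v))^2) (convex_Ioi 0)
  · apply ContinuousOn.div
    · fun_prop
    · fun_prop
    · intro x hx
      exact ne_of_gt (Real.sinh_pos_iff.2 (mul_pos ha0 hx))
  · intro x hx
    rw [interior_Ioi] at hx
    have hlin : HasDerivAt (fun v : ℝ => a * v) a x := by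
      simpa using (hasDerivAt_id x).const_mul a
    exact (Real.hasDerivAt_sinh x).div hlin.sinh
      (ne_of_gt (Real.sinh_pos_iff.2 (mul_pos ha0 hx)))
  · intro x hx
    rw [interior_Ioi] at hx
    have hW := W_nonneg (le_of_lt ha0) ha1 (le_of_lt hx) (a := a)
    have : 0 ≤ Real.cosh x * Real.sinh (a*x) - Real.sinh x * (Real.cosh (a*x) * a) := by
      nlinarith
    positivity


private def NN (v : ℝ) : ℝ :=
  Real.log (1 + 2 * Real.cosh (ss * v)) - ss * Real.log (2 * Real.cosh v)

private def NN' (v : ℝ) : ℝ :=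
  2 * (Real.sinh (ss*v) * ss) / (1 + 2 * Real.cosh (ss*v)) -
    ss * (2 * Real.sinh v / (2 * Real.cosh v))

private lemma one_add_cosh_pos (u : ℝ) : 0 < 1 + 2 * Real.cosh u := by
  have := Real.cosh_pos u; linarith

private lemma NN_hasDeriv (x : ℝ) : HasDerivAt NN (NN' x) x := by
  have hlin : HasDerivAt (fun v : ℝ => ss * v) ss x := by
    simpa using (hasDerivAt_id x).const_mul ss
  have h1 : HasDerivAt (fun v => 1 + 2 * Real.cosh (ss*v)) (2 * (Real.sinh (ss*x) * ss)) x :=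
    (hlin.cosh.const_mul 2).const_add 1
  have h2 := h1.log (ne_of_gt (one_add_cosh_pos (ss*x)))
  have h3 : HasDerivAt (fun v => 2 * Real.cosh v) (2 * Real.sinh x) x :=
    (Real.hasDerivAt_cosh x).const_mul 2
  have h4 := (h3.log (by positivity)).const_mul ss
  exact h2.sub h4

private lemma NN_cont : Continuous NN :=
  Differentiable.continuous fun x => (NN_hasDeriv x).differentiableAt

private lemma NN'_key (v : ℝ) :
    2 * Real.sinh ((ss-1)*v) - Real.sinh v =
      2 * Real.sinh (ss*v) * Real.cosh v - Real.sinh v * (1 + 2*Real.cosh (ss*v)) := by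
  have hid := Real.sinh_sub (ss*v) v
  have hv2 : (ss-1)*v = ss*v - v := by ring
  rw [hv2, hid]; ring

private lemma NN'_nonneg {v : ℝ} (h : Real.sinh v ≤ 2 * Real.sinh ((ss-1)*v)) : 0 ≤ NN' v := by
  have c1 := one_add_cosh_pos (ss*v)
  have c2 := Real.cosh_pos v
  have key : Real.sinh v * (1 + 2*Real.cosh (ss*v)) ≤ 2 * Real.sinh (ss*v) * Real.cosh v := by
    have := NN'_key v; linarith
  rw [NN', sub_nonneg, mul_div_assoc']
  rw [div_le_div_iff₀ (by positivity) c1]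
  nlinarith [mul_le_mul_of_nonneg_left key (le_of_lt ss_pos)]

private lemma NN'_nonpos {v : ℝ} (h : 2 * Real.sinh ((ss-1)*v) ≤ Real.sinh v) : NN' v ≤ 0 := by
  have c1 := one_add_cosh_pos (ss*v)
  have c2 := Real.cosh_pos v
  have key : 2 * Real.sinh (ss*v) * Real.cosh v ≤ Real.sinh v * (1 + 2*Real.cosh (ss*v)) := by
    have := NN'_key v; linarith
  rw [NN', sub_nonpos, mul_div_assoc']
  rw [div_le_div_iff₀ c1 (by positivity)]
  nlinarith [mul_le_mul_of_nonneg_left key (le_of_lt ss_pos)]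

private lemma NN_zero : NN 0 = 0 := by
  have : (1:ℝ) + 2 * Real.cosh 0 = 3 := by rw [Real.cosh_zero]; norm_num
  rw [NN, mul_zero, this, Real.cosh_zero, mul_one]
  have h2 : Real.log 2 ≠ 0 := ne_of_gt log2_pos
  rw [ss, div_mul_cancel₀ _ h2]
  ring

private lemma exp_form (u : ℝ) :
    1 + 2 * Real.cosh u = Real.exp u * (1 + Real.exp (-u) + Real.exp (-u)^2) := by
  rw [Real.cosh_eq, Real.exp_neg]
  have h := Real.exp_pos u
  field_simp
  ring

private lemma exp_form2 (u : ℝ) :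
    2 * Real.cosh u = Real.exp u * (1 + Real.exp (-u)^2) := by
  rw [Real.cosh_eq, Real.exp_neg]
  have h := Real.exp_pos u
  field_simp

private lemma NN_eq (v : ℝ) :
    NN v = Real.log (1 + Real.exp (-(ss*v)) + Real.exp (-(ss*v))^2) -
      ss * Real.log (1 + Real.exp (-v)^2) := by
  have p1 : (0:ℝ) < 1 + Real.exp (-(ss*v)) + Real.exp (-(ss*v))^2 := by positivity
  have p2 : (0:ℝ) < 1 + Real.exp (-v)^2 := by positivity
  rw [NN, exp_form, exp_form2, Real.log_mul (Real.exp_ne_zero _) (ne_of_gt p1),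
    Real.log_mul (Real.exp_ne_zero _) (ne_of_gt p2), Real.log_exp, Real.log_exp]
  ring

private lemma NN_tendsto : Tendsto NN atTop (nhds 0) := by
  have t0 : Tendsto (fun v : ℝ => -(ss*v)) atTop atBot :=
    tendsto_neg_atTop_atBot.comp (Tendsto.const_mul_atTop ss_pos tendsto_id)
  have t1 : Tendsto (fun v : ℝ => Real.exp (-(ss*v))) atTop (nhds 0) :=
    Real.tendsto_exp_atBot.comp t0
  have t2 : Tendsto (fun v : ℝ => Real.exp (-v)) atTop (nhds 0) :=
    Real.tendsto_exp_atBot.comp tendsto_neg_atTop_atBot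
  have l1 : Tendsto (fun v : ℝ => 1 + Real.exp (-(ss*v)) + Real.exp (-(ss*v))^2)
      atTop (nhds 1) := by
    have := (tendsto_const_nhds (x := (1:ℝ)) (f := atTop)).add t1 |>.add (t1.pow 2)
    simpa using this
  have l2 : Tendsto (fun v : ℝ => 1 + Real.exp (-v)^2) atTop (nhds 1) := by
    have := (tendsto_const_nhds (x := (1:ℝ)) (f := atTop)).add (t2.pow 2)
    simpa using this
  have m1 := (Real.continuousAt_log (by norm_num : (1:ℝ) ≠ 0)).tendsto.comp l1
  have m2 := (Real.continuousAt_log (by norm_num : (1:ℝ) ≠ 0)).tendsto.comp l2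
  have final := m1.sub (m2.const_mul ss)
  simp only [Real.log_one, mul_zero, sub_zero] at final
  exact Tendsto.congr (fun v => (NN_eq v).symm) final

private lemma NN_nonneg {v : ℝ} (hv : 0 ≤ v) : 0 ≤ NN v := by
  set a := ss - 1 with ha
  have ha0 : 0 < a := by have := one_lt_ss; simp [ha]; linarith
  have ha1 : a ≤ 1 := by have := ss_lt_two; simp [ha]; linarith
  rcases eq_or_lt_of_le hv with rfl | hv
  · rw [NN_zero]
  by_cases hP : Real.sinh v ≤ 2 * Real.sinh (a*v)
  · -- monotone on [0, v]
    have mono : MonotoneOn NN (Set.Icc 0 v) := by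
      apply monoOn_of_hasDeriv (f' := NN') (convex_Icc 0 v) NN_cont.continuousOn
        (fun x _ => NN_hasDeriv x)
      intro x hx
      rw [interior_Icc] at hx
      obtain ⟨hx0, hxv⟩ := hx
      apply NN'_nonneg
      rw [← ha]
      have hsx : 0 < Real.sinh (a*x) := Real.sinh_pos_iff.2 (mul_pos ha0 hx0)
      have hsv : 0 < Real.sinh (a*v) := Real.sinh_pos_iff.2 (mul_pos ha0 hv)
      have hr := ratio_mono ha0 ha1 (Set.mem_Ioi.2 hx0) (Set.mem_Ioi.2 hv) (le_of_lt hxv)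
      have h2 : Real.sinh v / Real.sinh (a*v) ≤ 2 := (div_le_iff₀ hsv).2 (by linarith)
      have := le_trans hr h2
      rw [div_le_iff₀ hsx] at this
      linarith
    have := mono (Set.left_mem_Icc.2 (le_of_lt hv)) (Set.right_mem_Icc.2 (le_of_lt hv))
      (le_of_lt hv)
    rw [NN_zero] at this
    exact this
  · push_neg at hP
    have anti : AntitoneOn NN (Set.Ici v) := by
      apply antiOn_of_hasDeriv (f' := NN') (convex_Ici v) NN_cont.continuousOn
        (fun x _ => NN_hasDeriv x)
      intro x hx
      rw [interior_Ici] at hx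
      apply NN'_nonpos
      rw [← ha]
      have hvx : v < x := hx
      have hsx : 0 < Real.sinh (a*x) := Real.sinh_pos_iff.2 (mul_pos ha0 (lt_trans hv hvx))
      have hsv : 0 < Real.sinh (a*v) := Real.sinh_pos_iff.2 (mul_pos ha0 hv)
      have hr := ratio_mono ha0 ha1 (Set.mem_Ioi.2 hv) (Set.mem_Ioi.2 (lt_trans hv hvx))
        (le_of_lt hvx)
      have h2 : 2 < Real.sinh v / Real.sinh (a*v) := (lt_div_iff₀ hsv).2 (by linarith)
      have := lt_of_lt_of_le h2 hr
      rw [lt_div_iff₀ hsx] at this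
      linarith
    apply le_of_tendsto NN_tendsto
    rw [Filter.eventually_atTop]
    exact ⟨v, fun u hu => anti (Set.self_mem_Ici) (Set.mem_Ici.2 hu) hu⟩

private lemma main_cosh {v : ℝ} (hv : 0 ≤ v) :
    (2 * Real.cosh v) ^ ss ≤ 1 + 2 * Real.cosh (ss * v) := by
  have h := NN_nonneg hv
  rw [NN, sub_nonneg] at h
  calc (2 * Real.cosh v) ^ ss = Real.exp (Real.log (2 * Real.cosh v) * ss) :=
        Real.rpow_def_of_pos (by positivity) ss
    _ ≤ Real.exp (Real.log (1 + 2 * Real.cosh (ss*v))) := by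
        apply Real.exp_le_exp.2; rw [mul_comm]; exact h
    _ = 1 + 2 * Real.cosh (ss*v) := Real.exp_log (one_add_cosh_pos _)


private lemma two_var_aux {x y : ℝ} (hx : 0 < x) (hy : 0 < y) (hxy : y ≤ x) :
    (x+y)^ss ≤ x^ss + (x*y)^(ss/2) + y^ss := by
  set Lx := Real.log x with hLx
  set Ly := Real.log y with hLy
  set v := (Lx - Ly)/2 with hv
  have hv0 : 0 ≤ v := by
    have := Real.log_le_log hy hxy
    rw [hv]; rw [hLx, hLy]; linarith
  have key := main_cosh hv0
  have e1 : Real.exp ((Lx+Ly)/2) * Real.exp v = x := by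
    rw [← Real.exp_add, show (Lx+Ly)/2 + v = Lx by rw [hv]; ring, hLx]
    exact Real.exp_log hx
  have e2 : Real.exp ((Lx+Ly)/2) * Real.exp (-v) = y := by
    rw [← Real.exp_add, show (Lx+Ly)/2 + -v = Ly by rw [hv]; ring, hLy]
    exact Real.exp_log hy
  have hc : Real.exp ((Lx+Ly)/2) * (2*Real.cosh v) = x + y := by
    rw [Real.cosh_eq]
    linear_combination e1 + e2
  have r1 : Real.exp (ss*(Lx+Ly)/2) * Real.exp (ss*v) = Real.exp (ss*Lx) := by
    rw [← Real.exp_add]; congr 1; rw [hv]; ring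
  have r2 : Real.exp (ss*(Lx+Ly)/2) * Real.exp (-(ss*v)) = Real.exp (ss*Ly) := by
    rw [← Real.exp_add]; congr 1; rw [hv]; ring
  have p1 : x ^ ss = Real.exp (ss*Lx) := by
    rw [Real.rpow_def_of_pos hx, ← hLx, mul_comm]
  have p2 : y ^ ss = Real.exp (ss*Ly) := by
    rw [Real.rpow_def_of_pos hy, ← hLy, mul_comm]
  have p3 : (x*y)^(ss/2) = Real.exp (ss*(Lx+Ly)/2) := by
    rw [Real.rpow_def_of_pos (by positivity), Real.log_mul (ne_of_gt hx) (ne_of_gt hy),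
      ← hLx, ← hLy]
    congr 1; ring
  have p0 : (x+y)^ss = Real.exp (ss*(Lx+Ly)/2) * (2*Real.cosh v)^ss := by
    rw [← hc, Real.mul_rpow (le_of_lt (Real.exp_pos _)) (by positivity)]
    congr 1
    rw [← Real.exp_log (Real.exp_pos ((Lx+Ly)/2)), Real.log_exp,
      Real.rpow_def_of_pos (Real.exp_pos _), Real.log_exp]
    congr 1; ring
  calc (x+y)^ss = Real.exp (ss*(Lx+Ly)/2) * (2*Real.cosh v)^ss := p0
    _ ≤ Real.exp (ss*(Lx+Ly)/2) * (1 + 2*Real.cosh (ss*v)) :=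
        mul_le_mul_of_nonneg_left key (le_of_lt (Real.exp_pos _))
    _ = x^ss + (x*y)^(ss/2) + y^ss := by
        rw [Real.cosh_eq (ss*v), p1, p2, p3]
        linear_combination r1 + r2

private lemma two_var {x y : ℝ} (hx : 0 ≤ x) (hy : 0 ≤ y) :
    (x+y)^ss ≤ x^ss + (x*y)^(ss/2) + y^ss := by
  have hss : ss ≠ 0 := ne_of_gt ss_pos
  have hss2 : ss/2 ≠ 0 := by positivity
  rcases eq_or_lt_of_le hx with rfl | hx
  · simp [Real.zero_rpow hss, Real.zero_rpow hss2]
  rcases eq_or_lt_of_le hy with rfl | hy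
  · simp [Real.zero_rpow hss, Real.zero_rpow hss2]
  rcases le_total y x with h | h
  · exact two_var_aux hx hy h
  · have := two_var_aux hy hx h
    rw [add_comm y x, mul_comm y x] at this
    linarith

private lemma rpow_subadd {x y c : ℝ} (hx : 0 ≤ x) (hy : 0 ≤ y) (hc0 : 0 ≤ c) (hc1 : c ≤ 1) :
    (x+y)^c ≤ x^c + y^c := by
  have h := NNReal.rpow_add_le_add_rpow (x.toNNReal) (y.toNNReal) hc0 hc1
  have h1 : ((x.toNNReal + y.toNNReal : NNReal) : ℝ) = x + y := by
    simp [Real.coe_toNNReal _ hx, Real.coe_toNNReal _ hy]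
  calc (x+y)^c = (((x.toNNReal + y.toNNReal : NNReal) : ℝ))^c := by rw [h1]
    _ = (((x.toNNReal + y.toNNReal)^c : NNReal) : ℝ) := by rw [NNReal.coe_rpow]
    _ ≤ ((x.toNNReal^c + y.toNNReal^c : NNReal) : ℝ) := by exact_mod_cast h
    _ = x^c + y^c := by
        push_cast [NNReal.coe_rpow]
        rw [Real.coe_toNNReal _ hx, Real.coe_toNNReal _ hy]

private lemma th_pos : 0 < ss/2 := by have := ss_pos; positivity

private lemma th_lt_one : ss/2 < 1 := by have := ss_lt_two; linarith

private lemma F_lemma {p q : ℝ} (hp : 0 < p) (hpq : p ≤ q) :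
    ((1+p)*(1+q))^(ss/2) ≤ 1 + q^(ss/2) + (p*q)^(ss/2) := by
  set c := ss/2 with hcdef
  have hc0 : 0 < c := th_pos
  have hc1 : c < 1 := th_lt_one
  have hq : 0 < q := lt_of_lt_of_le hp hpq
  set F : ℝ → ℝ := fun t => 1 + q^c + q^c * t^c - (1+q)^c * (1+t)^c with hF
  suffices hFp : 0 ≤ F p by
    rw [Real.mul_rpow (by linarith) (by linarith), Real.mul_rpow (le_of_lt hp) (le_of_lt hq)]
    have h : 0 ≤ 1 + q^c + q^c * p^c - (1+q)^c * (1+p)^c := hFp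
    nlinarith [h]
  set F' : ℝ → ℝ := fun t => q^c * (c * t^(c-1)) - (1+q)^c * (c * (1+t)^(c-1)) with hF'
  have hasD : ∀ t : ℝ, 0 < t → HasDerivAt F (F' t) t := by
    intro t ht
    have d1 : HasDerivAt (fun t:ℝ => t^c) (c * t^(c-1)) t :=
      Real.hasDerivAt_rpow_const (Or.inl (ne_of_gt ht))
    have dlin : HasDerivAt (fun t:ℝ => 1+t) 1 t := (hasDerivAt_id t).const_add 1
    have d2 : HasDerivAt (fun t:ℝ => (1+t)^c) (c * (1+t)^(c-1)) t := by
      have := (Real.hasDerivAt_rpow_const (p := c)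
        (Or.inl (by positivity : (1:ℝ)+t ≠ 0))).comp t dlin
      exact this.congr_deriv (mul_one _)
    exact ((d1.const_mul (q^c)).const_add (1 + q^c)).sub (d2.const_mul ((1+q)^c))
  have sign_pos : ∀ t : ℝ, 0 < t →
      (1+q)^c * t^(1-c) ≤ q^c * (1+t)^(1-c) → 0 ≤ F' t := by
    intro t ht hC
    have ht1 : t^(1-c) * t^(c-1) = 1 := by
      rw [← Real.rpow_add ht]; norm_num
    have ht2 : (1+t)^(1-c) * (1+t)^(c-1) = 1 := by
      rw [← Real.rpow_add (by linarith : (0:ℝ) < 1+t)]; norm_num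
    have hK : (0:ℝ) ≤ t^(c-1) * (1+t)^(c-1) := by positivity
    have hmul := mul_le_mul_of_nonneg_right hC hK
    have lhs_eq : (1+q)^c * t^(1-c) * (t^(c-1) * (1+t)^(c-1)) = (1+q)^c * (1+t)^(c-1) := by
      calc (1+q)^c * t^(1-c) * (t^(c-1) * (1+t)^(c-1))
          = (1+q)^c * (1+t)^(c-1) * (t^(1-c) * t^(c-1)) := by ring
        _ = (1+q)^c * (1+t)^(c-1) := by rw [ht1, mul_one]
    have rhs_eq : q^c * (1+t)^(1-c) * (t^(c-1) * (1+t)^(c-1)) = q^c * t^(c-1) := by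
      calc q^c * (1+t)^(1-c) * (t^(c-1) * (1+t)^(c-1))
          = q^c * t^(c-1) * ((1+t)^(1-c) * (1+t)^(c-1)) := by ring
        _ = q^c * t^(c-1) := by rw [ht2, mul_one]
    rw [lhs_eq, rhs_eq] at hmul
    show (0:ℝ) ≤ q^c * (c * t^(c-1)) - (1+q)^c * (c * (1+t)^(c-1))
    nlinarith [mul_le_mul_of_nonneg_left hmul (le_of_lt hc0)]
  have sign_neg : ∀ t : ℝ, 0 < t →
      q^c * (1+t)^(1-c) ≤ (1+q)^c * t^(1-c) → F' t ≤ 0 := by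
    intro t ht hC
    have ht1 : t^(1-c) * t^(c-1) = 1 := by
      rw [← Real.rpow_add ht]; norm_num
    have ht2 : (1+t)^(1-c) * (1+t)^(c-1) = 1 := by
      rw [← Real.rpow_add (by linarith : (0:ℝ) < 1+t)]; norm_num
    have hK : (0:ℝ) ≤ t^(c-1) * (1+t)^(c-1) := by positivity
    have hmul := mul_le_mul_of_nonneg_right hC hK
    have lhs_eq : (1+q)^c * t^(1-c) * (t^(c-1) * (1+t)^(c-1)) = (1+q)^c * (1+t)^(c-1) := by
      calc (1+q)^c * t^(1-c) * (t^(c-1) * (1+t)^(c-1))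
          = (1+q)^c * (1+t)^(c-1) * (t^(1-c) * t^(c-1)) := by ring
        _ = (1+q)^c * (1+t)^(c-1) := by rw [ht1, mul_one]
    have rhs_eq : q^c * (1+t)^(1-c) * (t^(c-1) * (1+t)^(c-1)) = q^c * t^(c-1) := by
      calc q^c * (1+t)^(1-c) * (t^(c-1) * (1+t)^(c-1))
          = q^c * t^(c-1) * ((1+t)^(1-c) * (1+t)^(c-1)) := by ring
        _ = q^c * t^(c-1) := by rw [ht2, mul_one]
    rw [rhs_eq, lhs_eq] at hmul
    show q^c * (c * t^(c-1)) - (1+q)^c * (c * (1+t)^(c-1)) ≤ (0:ℝ)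
    nlinarith [mul_le_mul_of_nonneg_left hmul (le_of_lt hc0)]
  have h1c : (0:ℝ) ≤ 1 - c := by linarith
  have closure_down : ∀ u t : ℝ, 0 < u → u ≤ t →
      (1+q)^c * t^(1-c) ≤ q^c * (1+t)^(1-c) →
      (1+q)^c * u^(1-c) ≤ q^c * (1+u)^(1-c) := by
    intro u t hu hut hC
    have ht : 0 < t := lt_of_lt_of_le hu hut
    have key : u^(1-c) * (1+t)^(1-c) ≤ t^(1-c) * (1+u)^(1-c) := by
      rw [← Real.mul_rpow (le_of_lt hu) (by linarith),
        ← Real.mul_rpow (le_of_lt ht) (by linarith)]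
      exact Real.rpow_le_rpow (by positivity) (by nlinarith) h1c
    have A := mul_le_mul_of_nonneg_left key
      (Real.rpow_nonneg (by linarith : (0:ℝ) ≤ 1+q) c)
    have B := mul_le_mul_of_nonneg_right hC
      (Real.rpow_nonneg (by linarith : (0:ℝ) ≤ 1+u) (1-c))
    have hpos : (0:ℝ) < (1+t)^(1-c) := Real.rpow_pos_of_pos (by linarith) _
    have chain : ((1+q)^c * u^(1-c)) * (1+t)^(1-c) ≤ (q^c * (1+u)^(1-c)) * (1+t)^(1-c) := by
      nlinarith [A, B]
    exact le_of_mul_le_mul_right chain hpos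
  have closure_up : ∀ u t : ℝ, 0 < t → t ≤ u →
      q^c * (1+t)^(1-c) ≤ (1+q)^c * t^(1-c) →
      q^c * (1+u)^(1-c) ≤ (1+q)^c * u^(1-c) := by
    intro u t ht htu hC
    have hu : 0 < u := lt_of_lt_of_le ht htu
    have key : t^(1-c) * (1+u)^(1-c) ≤ u^(1-c) * (1+t)^(1-c) := by
      rw [← Real.mul_rpow (le_of_lt ht) (by linarith),
        ← Real.mul_rpow (le_of_lt hu) (by linarith)]
      exact Real.rpow_le_rpow (by positivity) (by nlinarith) h1c
    have A := mul_le_mul_of_nonneg_left key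
      (Real.rpow_nonneg (by linarith : (0:ℝ) ≤ 1+q) c)
    have B := mul_le_mul_of_nonneg_right hC
      (Real.rpow_nonneg (by linarith : (0:ℝ) ≤ 1+u) (1-c))
    have hpos : (0:ℝ) < (1+t)^(1-c) := Real.rpow_pos_of_pos (by linarith) _
    have chain : (q^c * (1+u)^(1-c)) * (1+t)^(1-c) ≤ ((1+q)^c * u^(1-c)) * (1+t)^(1-c) := by
      nlinarith [A, B]
    exact le_of_mul_le_mul_right chain hpos
  have contpow : Continuous (fun t:ℝ => t^c) :=
    continuous_iff_continuousAt.2 (fun x => Real.continuousAt_rpow_const x c (Or.inr (le_of_lt hc0)))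
  have cont1 : Continuous (fun t:ℝ => (1+t)^c) :=
    contpow.comp (continuous_const.add continuous_id)
  have Fcont : Continuous F := by
    apply Continuous.sub
    · exact continuous_const.add (continuous_const.mul contpow)
    · exact continuous_const.mul cont1
  have F0 : 0 ≤ F 0 := by
    have h0 : (0:ℝ)^c = 0 := Real.zero_rpow (ne_of_gt hc0)
    have hsub := rpow_subadd (by norm_num : (0:ℝ) ≤ 1) (le_of_lt hq)
      (le_of_lt hc0) (le_of_lt hc1)
    rw [Real.one_rpow] at hsub
    show 0 ≤ 1 + q^c + q^c * (0:ℝ)^c - (1+q)^c * (1+(0:ℝ))^c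
    norm_num [h0, Real.one_rpow]
    linarith
  have Fq : 0 ≤ F q := by
    have h2v := two_var (by norm_num : (0:ℝ) ≤ 1) (le_of_lt hq) (x := 1) (y := q)
    rw [Real.one_rpow, one_mul] at h2v
    have e1 : (1+q)^ss = (1+q)^c * (1+q)^c := by
      rw [← Real.rpow_add (by linarith : (0:ℝ) < 1+q)]; congr 1; rw [hcdef]; ring
    have e2 : q^ss = q^c * q^c := by
      rw [← Real.rpow_add hq]; congr 1; rw [hcdef]; ring
    rw [← hcdef] at h2v
    show 0 ≤ 1 + q^c + q^c * q^c - (1+q)^c * (1+q)^c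
    rw [← e1, ← e2]
    linarith
  by_cases hCp : (1+q)^c * p^(1-c) ≤ q^c * (1+p)^(1-c)
  · have mono : MonotoneOn F (Set.Icc 0 p) := by
      apply monoOn_of_hasDeriv (f' := F') (convex_Icc 0 p) Fcont.continuousOn
      · intro x hx; rw [interior_Icc] at hx; exact hasD x hx.1
      · intro x hx; rw [interior_Icc] at hx
        exact sign_pos x hx.1 (closure_down x p hx.1 (le_of_lt hx.2) hCp)
    have := mono (Set.left_mem_Icc.2 (le_of_lt hp)) (Set.right_mem_Icc.2 (le_of_lt hp))
      (le_of_lt hp)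
    linarith [F0]
  · push_neg at hCp
    have anti : AntitoneOn F (Set.Icc p q) := by
      apply antiOn_of_hasDeriv (f' := F') (convex_Icc p q) Fcont.continuousOn
      · intro x hx; rw [interior_Icc] at hx; exact hasD x (lt_trans hp hx.1)
      · intro x hx; rw [interior_Icc] at hx
        exact sign_neg x (lt_trans hp hx.1) (closure_up x p hp (le_of_lt hx.1) (le_of_lt hCp))
    have := anti (Set.left_mem_Icc.2 hpq) (Set.right_mem_Icc.2 hpq) hpq
    linarith [Fq]


private lemma four_var {a0 a1 b0 b1 : ℝ} (ha0 : 0 ≤ a0) (ha1 : 0 ≤ a1) (hb0 : 0 ≤ b0)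
    (hb1 : 0 ≤ b1) (h : a1 * b0 ≤ a0 * b1) :
    ((a0+a1)*(b0+b1))^(ss/2) ≤ (a0*b0)^(ss/2) + (a0*b1)^(ss/2) + (a1*b1)^(ss/2) := by
  have hc0 := th_pos
  have hc1 := th_lt_one
  have hcne : ss/2 ≠ 0 := ne_of_gt hc0
  rcases eq_or_lt_of_le ha0 with rfl | ha0p
  · have h00 : a1 * b0 = 0 := le_antisymm (by simpa using h) (mul_nonneg ha1 hb0)
    rcases mul_eq_zero.1 h00 with rfl | rfl
    · simp [Real.zero_rpow hcne]
    · simp [Real.zero_rpow hcne]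
  rcases eq_or_lt_of_le hb0 with rfl | hb0p
  · rw [zero_add, mul_zero, Real.zero_rpow hcne]
    rw [show (a0+a1)*b1 = a0*b1 + a1*b1 by ring]
    have := rpow_subadd (mul_nonneg (le_of_lt ha0p) hb1) (mul_nonneg ha1 hb1)
      (le_of_lt hc0) (le_of_lt hc1)
    linarith
  rcases eq_or_lt_of_le ha1 with rfl | ha1p
  · rw [add_zero, zero_mul, Real.zero_rpow hcne]
    rw [show a0*(b0+b1) = a0*b0 + a0*b1 by ring]
    have := rpow_subadd (mul_nonneg (le_of_lt ha0p) (le_of_lt hb0p))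
      (mul_nonneg (le_of_lt ha0p) hb1) (le_of_lt hc0) (le_of_lt hc1)
    linarith
  have hb1p : 0 < b1 := by
    rcases eq_or_lt_of_le hb1 with rfl | h'
    · exfalso; nlinarith
    · exact h'
  have ha0ne : a0 ≠ 0 := ne_of_gt ha0p
  have hb0ne : b0 ≠ 0 := ne_of_gt hb0p
  set p := a1/a0 with hp
  set q := b1/b0 with hq
  have hpp : 0 < p := div_pos ha1p ha0p
  have hqq : 0 < q := div_pos hb1p hb0p
  have hpq : p ≤ q := by
    rw [hp, hq, div_le_div_iff₀ ha0p hb0p]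
    nlinarith [h]
  have key := F_lemma hpp hpq
  have hab : (0:ℝ) < a0*b0 := mul_pos ha0p hb0p
  have habc : (0:ℝ) < (a0*b0)^(ss/2) := Real.rpow_pos_of_pos hab _
  have e0 : (a0*b0) * ((1+p)*(1+q)) = (a0+a1)*(b0+b1) := by
    rw [hp, hq]; field_simp
  have e1 : (a0*b0) * q = a0*b1 := by rw [hq]; field_simp
  have e2 : (a0*b0) * (p*q) = a1*b1 := by rw [hp, hq]; field_simp
  calc ((a0+a1)*(b0+b1))^(ss/2) = ((a0*b0) * ((1+p)*(1+q)))^(ss/2) := by rw [e0]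
    _ = (a0*b0)^(ss/2) * ((1+p)*(1+q))^(ss/2) :=
        Real.mul_rpow (le_of_lt hab) (mul_nonneg (by linarith) (by linarith))
    _ ≤ (a0*b0)^(ss/2) * (1 + q^(ss/2) + (p*q)^(ss/2)) :=
        mul_le_mul_of_nonneg_left key (le_of_lt habc)
    _ = (a0*b0)^(ss/2) + (a0*b0)^(ss/2)*q^(ss/2) + (a0*b0)^(ss/2)*(p*q)^(ss/2) := by ring
    _ = (a0*b0)^(ss/2) + (a0*b1)^(ss/2) + (a1*b1)^(ss/2) := by
        rw [← Real.mul_rpow (le_of_lt hab) (le_of_lt hqq),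
          ← Real.mul_rpow (le_of_lt hab) (le_of_lt (mul_pos hpp hqq)), e1, e2]


private def splitEquiv (n : ℕ) : (Fin (n+1) → ℤ) ≃+ (Fin n → ℤ) × ℤ where
  toFun x := (Fin.tail x, x 0)
  invFun p := Fin.cons p.2 p.1
  left_inv x := Fin.cons_self_tail x
  right_inv p := by simp
  map_add' x y := rfl

private def slc (n : ℕ) (S : Finset ((Fin n → ℤ) × ℤ)) (k : ℤ) : Finset (Fin n → ℤ) :=
  (S.filter (fun x => x.2 = k)).image Prod.fst

private lemma mem_slc {n : ℕ} {S : Finset ((Fin n → ℤ) × ℤ)} {k : ℤ} {x : Fin n → ℤ} :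
    x ∈ slc n S k ↔ (x, k) ∈ S := by
  constructor
  · intro hx
    obtain ⟨a, ha, rfl⟩ := Finset.mem_image.1 hx
    obtain ⟨haS, h2⟩ := Finset.mem_filter.1 ha
    have : a = (a.1, k) := Prod.ext rfl h2
    rwa [← this]
  · intro h
    exact Finset.mem_image.2 ⟨(x,k), Finset.mem_filter.2 ⟨h, rfl⟩, rfl⟩

private lemma slc_card {n : ℕ} (S : Finset ((Fin n → ℤ) × ℤ))
    (hS : ∀ x ∈ S, x.2 = 0 ∨ x.2 = 1) :
    S.card = (slc n S 0).card + (slc n S 1).card := by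
  have inj : ∀ k : ℤ, Set.InjOn (Prod.fst : (Fin n → ℤ) × ℤ → (Fin n → ℤ)) ↑(S.filter (fun x => x.2 = k)) := by
    intro k x hx y hy hxy
    simp only [Finset.coe_filter, Set.mem_setOf_eq] at hx hy
    exact Prod.ext hxy (hx.2.trans hy.2.symm)
  rw [slc, slc, Finset.card_image_of_injOn (inj 0), Finset.card_image_of_injOn (inj 1)]
  rw [← Finset.card_filter_add_card_filter_not (fun x => x.2 = 0) (s := S)]
  congr 1
  apply congrArg
  apply Finset.filter_congr
  intro x hx
  rcases hS x hx with h | h <;> simp [h]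

private lemma slc_add_card {n : ℕ} (S T : Finset ((Fin n → ℤ) × ℤ)) (i j : ℤ) :
    ((slc n S i) + (slc n T j)).card ≤ ((S + T).filter (fun x => x.2 = i + j)).card := by
  apply Finset.card_le_card_of_injOn (fun w => (w, i+j))
  · intro w hw
    obtain ⟨u, hu, v, hv, rfl⟩ := Finset.mem_add.1 hw
    apply Finset.mem_filter.2
    refine ⟨Finset.mem_add.2 ⟨(u,i), mem_slc.1 hu, (v,j), mem_slc.1 hv, rfl⟩, rfl⟩
  · intro x _ y _ hxy
    exact (Prod.ext_iff.1 hxy).1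

private lemma three_filters {n : ℕ} (U : Finset ((Fin n → ℤ) × ℤ)) :
    (U.filter (fun x => x.2 = 0)).card + (U.filter (fun x => x.2 = 1)).card
      + (U.filter (fun x => x.2 = 2)).card ≤ U.card := by
  have d01 : Disjoint (U.filter (fun x => x.2 = 0)) (U.filter (fun x => x.2 = 1)) := by
    rw [Finset.disjoint_left]
    intro a h0 h1
    have e0 := (Finset.mem_filter.1 h0).2
    have e1 := (Finset.mem_filter.1 h1).2
    omega
  have d2 : Disjoint ((U.filter (fun x => x.2 = 0)) ∪ (U.filter (fun x => x.2 = 1)))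
      (U.filter (fun x => x.2 = 2)) := by
    rw [Finset.disjoint_left]
    intro a h0 h1
    have e1 := (Finset.mem_filter.1 h1).2
    rcases Finset.mem_union.1 h0 with h | h <;>
      · have := (Finset.mem_filter.1 h).2; omega
  calc (U.filter (fun x => x.2 = 0)).card + (U.filter (fun x => x.2 = 1)).card
      + (U.filter (fun x => x.2 = 2)).card
      = ((U.filter (fun x => x.2 = 0)) ∪ (U.filter (fun x => x.2 = 1))
          ∪ (U.filter (fun x => x.2 = 2))).card := by
        rw [Finset.card_union_of_disjoint d2, Finset.card_union_of_disjoint d01]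
    _ ≤ U.card := by
        apply Finset.card_le_card
        intro a ha
        rcases Finset.mem_union.1 ha with h | h
        · rcases Finset.mem_union.1 h with h' | h'
          · exact (Finset.mem_filter.1 h').1
          · exact (Finset.mem_filter.1 h').1
        · exact (Finset.mem_filter.1 h).1


theorem stmt_11 (n : ℕ) (A B : Finset (Fin n → ℤ))
    (hA : ∀ x ∈ A, ∀ i, x i = 0 ∨ x i = 1)
    (hB : ∀ x ∈ B, ∀ i, x i = 0 ∨ x i = 1) :
    ((A.card : ℝ) * (B.card : ℝ)) ^ (Real.log 3 / Real.log 4) ≤ ((A + B).card : ℝ) := by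
  have hθ : Real.log 3 / Real.log 4 = ss/2 := by
    rw [ss, show (4:ℝ) = 2^2 by norm_num, Real.log_pow]
    push_cast
    ring
  rw [hθ]
  have hcne : ss/2 ≠ 0 := ne_of_gt th_pos
  revert A B
  induction n with
  | zero =>
    intro A B hA hB
    rcases Finset.eq_empty_or_nonempty A with rfl | hAne
    · rw [Finset.card_empty]
      push_cast
      rw [zero_mul, Real.zero_rpow hcne]
      positivity
    rcases Finset.eq_empty_or_nonempty B with rfl | hBne
    · rw [Finset.card_empty]
      push_cast
      rw [mul_zero, Real.zero_rpow hcne]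
      positivity
    have hA1 : A.card = 1 := le_antisymm
      (Finset.card_le_one.2 (fun a _ b _ => Subsingleton.elim a b)) (Finset.card_pos.2 hAne)
    have hB1 : B.card = 1 := le_antisymm
      (Finset.card_le_one.2 (fun a _ b _ => Subsingleton.elim a b)) (Finset.card_pos.2 hBne)
    have hab : 1 ≤ (A+B).card := Finset.card_pos.2 (hAne.add hBne)
    rw [hA1, hB1]
    push_cast
    rw [one_mul, Real.one_rpow]
    exact_mod_cast hab
  | succ n IH =>
    intro A B hA hB
    set e := splitEquiv n with he
    set S := A.image ⇑e with hSdef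
    set T := B.image ⇑e with hTdef
    have einj : Function.Injective ⇑e := EquivLike.injective e
    have eS : ∀ x ∈ S, x.2 = 0 ∨ x.2 = 1 := by
      intro x hx
      obtain ⟨a, ha, rfl⟩ := Finset.mem_image.1 hx
      exact hA a ha 0
    have eT : ∀ x ∈ T, x.2 = 0 ∨ x.2 = 1 := by
      intro x hx
      obtain ⟨a, ha, rfl⟩ := Finset.mem_image.1 hx
      exact hB a ha 0
    have cubeS : ∀ k : ℤ, ∀ x ∈ slc n S k, ∀ i, x i = 0 ∨ x i = 1 := by
      intro k x hx i
      obtain ⟨a, ha, hea⟩ := Finset.mem_image.1 (mem_slc.1 hx)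
      have hx1 : x = Fin.tail a := ((Prod.ext_iff.1 hea).1).symm
      rw [hx1]
      exact hA a ha i.succ
    have cubeT : ∀ k : ℤ, ∀ x ∈ slc n T k, ∀ i, x i = 0 ∨ x i = 1 := by
      intro k x hx i
      obtain ⟨a, ha, hea⟩ := Finset.mem_image.1 (mem_slc.1 hx)
      have hx1 : x = Fin.tail a := ((Prod.ext_iff.1 hea).1).symm
      rw [hx1]
      exact hB a ha i.succ
    have H : ∀ i j : ℤ,
        (((slc n S i).card : ℝ) * ((slc n T j).card : ℝ)) ^ (ss/2)
          ≤ ((slc n S i + slc n T j).card : ℝ) :=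
      fun i j => IH (slc n S i) (slc n T j) (cubeS i) (cubeT j)
    have cA : A.card = (slc n S 0).card + (slc n S 1).card := by
      rw [← slc_card S eS, hSdef]
      exact (Finset.card_image_of_injective A einj).symm
    have cB : B.card = (slc n T 0).card + (slc n T 1).card := by
      rw [← slc_card T eT, hTdef]
      exact (Finset.card_image_of_injective B einj).symm
    have cAB : (A+B).card = (S+T).card := by
      rw [hSdef, hTdef, ← Finset.image_add]
      exact (Finset.card_image_of_injective (A+B) einj).symm
    have h00 := slc_add_card S T 0 0
    have h01 := slc_add_card S T 0 1
    have h10 := slc_add_card S T 1 0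
    have h11 := slc_add_card S T 1 1
    norm_num at h00 h01 h10 h11
    have hthree := three_filters (S+T)
    have sum1 : (slc n S 0 + slc n T 0).card + (slc n S 0 + slc n T 1).card
        + (slc n S 1 + slc n T 1).card ≤ (S+T).card := by omega
    have sum2 : (slc n S 0 + slc n T 0).card + (slc n S 1 + slc n T 0).card
        + (slc n S 1 + slc n T 1).card ≤ (S+T).card := by omega
    have na0 : (0:ℝ) ≤ ((slc n S 0).card : ℝ) := Nat.cast_nonneg _
    have na1 : (0:ℝ) ≤ ((slc n S 1).card : ℝ) := Nat.cast_nonneg _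
    have nb0 : (0:ℝ) ≤ ((slc n T 0).card : ℝ) := Nat.cast_nonneg _
    have nb1 : (0:ℝ) ≤ ((slc n T 1).card : ℝ) := Nat.cast_nonneg _
    have goalcast : ((A.card : ℝ) * (B.card : ℝ)) ^ (ss/2) =
        (((((slc n S 0).card : ℝ)) + ((slc n S 1).card : ℝ))
          * ((((slc n T 0).card : ℝ)) + ((slc n T 1).card : ℝ))) ^ (ss/2) := by
      rw [cA, cB]
      push_cast
      ring_nf
    rcases le_total (((slc n S 1).card : ℝ) * ((slc n T 0).card : ℝ))
        (((slc n S 0).card : ℝ) * ((slc n T 1).card : ℝ)) with hw | hw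
    · have main := four_var na0 na1 nb0 nb1 hw
      have hsum : ((slc n S 0 + slc n T 0).card : ℝ) + ((slc n S 0 + slc n T 1).card : ℝ)
          + ((slc n S 1 + slc n T 1).card : ℝ) ≤ ((A+B).card : ℝ) := by
        rw [cAB]
        exact_mod_cast sum1
      calc ((A.card : ℝ) * (B.card : ℝ)) ^ (ss/2)
          = (((((slc n S 0).card : ℝ)) + ((slc n S 1).card : ℝ))
            * ((((slc n T 0).card : ℝ)) + ((slc n T 1).card : ℝ))) ^ (ss/2) := goalcast
        _ ≤ (((slc n S 0).card : ℝ) * ((slc n T 0).card : ℝ))^(ss/2)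
            + (((slc n S 0).card : ℝ) * ((slc n T 1).card : ℝ))^(ss/2)
            + (((slc n S 1).card : ℝ) * ((slc n T 1).card : ℝ))^(ss/2) := main
        _ ≤ ((A+B).card : ℝ) := by linarith [H 0 0, H 0 1, H 1 1, hsum]
    · have hw' : ((slc n T 1).card : ℝ) * ((slc n S 0).card : ℝ)
          ≤ ((slc n T 0).card : ℝ) * ((slc n S 1).card : ℝ) := by
        rw [mul_comm, mul_comm (((slc n T 0).card : ℝ))]
        exact hw
      have main := four_var nb0 nb1 na0 na1 hw'
      have hsum : ((slc n S 0 + slc n T 0).card : ℝ) + ((slc n S 1 + slc n T 0).card : ℝ)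
          + ((slc n S 1 + slc n T 1).card : ℝ) ≤ ((A+B).card : ℝ) := by
        rw [cAB]
        exact_mod_cast sum2
      calc ((A.card : ℝ) * (B.card : ℝ)) ^ (ss/2)
          = (((((slc n T 0).card : ℝ)) + ((slc n T 1).card : ℝ))
            * ((((slc n S 0).card : ℝ)) + ((slc n S 1).card : ℝ))) ^ (ss/2) := by
            rw [goalcast, mul_comm]
        _ ≤ (((slc n T 0).card : ℝ) * ((slc n S 0).card : ℝ))^(ss/2)
            + (((slc n T 0).card : ℝ) * ((slc n S 1).card : ℝ))^(ss/2)
            + (((slc n T 1).card : ℝ) * ((slc n S 1).card : ℝ))^(ss/2) := main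
        _ = (((slc n S 0).card : ℝ) * ((slc n T 0).card : ℝ))^(ss/2)
            + (((slc n S 1).card : ℝ) * ((slc n T 0).card : ℝ))^(ss/2)
            + (((slc n S 1).card : ℝ) * ((slc n T 1).card : ℝ))^(ss/2) := by
            rw [mul_comm (((slc n T 0).card : ℝ)), mul_comm (((slc n T 0).card : ℝ)),
              mul_comm (((slc n T 1).card : ℝ))]
        _ ≤ ((A+B).card : ℝ) := by linarith [H 0 0, H 1 0, H 1 1, hsum]

end SumsetAux
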